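/- For the moment curve Γ in ℝᵏ, the determinant of the k×k matrix with rows ∂¹Γ(0), ..., ∂ˡΓ(0), ∂¹Γ(1), ..., ∂^{k−l}Γ(1) has absolute value equal to (k choose l) · (∏_{i=1}^{l} i!) · (∏_{j=1}^{k−l} j!). -/

import Mathlib

/-- The `i`-th derivative of the moment curve `Γ(ξ) = (ξ, ξ², …, ξᵏ)` in `ℝᵏ`. -/
noncomputable def dGamma (k i : ℕ) (ξ : ℝ) : Fin k → ℝ :=
  fun j => (Nat.descFactorial ((j : ℕ) + 1) i : ℝ) * ξ ^ ((j : ℕ) + 1 - i)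

open Finset Polynomial Matrix

lemma cast_descFact (n m : ℕ) :
    ((Nat.descFactorial n m : ℕ) : ℝ) = ∏ i ∈ Finset.range m, ((n : ℝ) - i) := by
  rcases le_or_gt m n with h | h
  · rw [Nat.descFactorial_eq_prod_range, Nat.cast_prod]
    refine Finset.prod_congr rfl fun i hi => ?_
    have : i ≤ n := le_trans (le_of_lt (Finset.mem_range.mp hi)) h
    rw [Nat.cast_sub this]
  · rw [Nat.descFactorial_eq_zero_iff_lt.mpr h, Nat.cast_zero]
    symm
    refine Finset.prod_eq_zero (Finset.mem_range.mpr h) ?_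
    simp

lemma fact_prod_shift (l : ℕ) : ∀ m : ℕ,
    l.factorial * ∏ t ∈ Finset.range m, (l + t + 1) = (l + m).factorial
  | 0 => by simp
  | m + 1 => by
    rw [Finset.prod_range_succ, ← mul_assoc, fact_prod_shift l m,
      show l + (m + 1) = (l + m) + 1 by ring, Nat.factorial_succ]
    ring

noncomputable def qpoly (s : ℕ) : Polynomial ℝ :=
  ∏ i ∈ Finset.range s, (Polynomial.X - Polynomial.C ((i : ℝ) + 1))

lemma qpoly_monic (s : ℕ) : (qpoly s).Monic :=
  monic_prod_of_monic _ _ fun _ _ => monic_X_sub_C _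

lemma qpoly_natDegree (s : ℕ) : (qpoly s).natDegree = s := by
  rw [qpoly, natDegree_prod_of_monic _ _ fun i _ => monic_X_sub_C _]
  simp only [natDegree_X_sub_C]
  simp

lemma qpoly_eval (s : ℕ) (x : ℝ) :
    (qpoly s).eval x = ∏ i ∈ Finset.range s, (x - ((i : ℝ) + 1)) := by
  simp [qpoly, eval_prod]

lemma vdm_id (m : ℕ) : (Matrix.vandermonde (fun i : Fin m => (i : ℝ))).det
    = ((∏ x ∈ Finset.range m, x.factorial : ℕ) : ℝ) := by
  cases m with
  | zero => simp
  | succ n =>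
    rw [Matrix.det_vandermonde_id_eq_superFactorial, Nat.prod_range_succ_factorial]

theorem moment_curve_det_zero_one (k l : ℕ) (hk : 1 ≤ k) (hl : l ≤ k) :
    |(Matrix.of (fun r c : Fin k =>
        if (r : ℕ) < l then dGamma k ((r : ℕ) + 1) (0 : ℝ) c
        else dGamma k ((r : ℕ) - l + 1) (1 : ℝ) c)).det|
      = (Nat.choose k l : ℝ) * (∏ i ∈ Finset.Icc 1 l, (Nat.factorial i : ℝ))
          * (∏ j ∈ Finset.Icc 1 (k - l), (Nat.factorial j : ℝ)) := by
  obtain ⟨m, rfl⟩ : ∃ m, k = l + m := ⟨k - l, (Nat.add_sub_cancel' hl).symm⟩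
  set M : Matrix (Fin (l + m)) (Fin (l + m)) ℝ :=
    Matrix.of (fun r c : Fin (l + m) =>
      if (r : ℕ) < l then dGamma (l + m) ((r : ℕ) + 1) (0 : ℝ) c
      else dGamma (l + m) ((r : ℕ) - l + 1) (1 : ℝ) c) with hM
  have key : M.submatrix finSumFinEquiv finSumFinEquiv =
      Matrix.fromBlocks
        (Matrix.diagonal fun r : Fin l => (((r : ℕ) + 1).factorial : ℝ)) 0
        (Matrix.of fun (s : Fin m) (c : Fin l) =>
          (Nat.descFactorial ((c : ℕ) + 1) ((s : ℕ) + 1) : ℝ))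
        (Matrix.of fun (s t : Fin m) =>
          (Nat.descFactorial (l + (t : ℕ) + 1) ((s : ℕ) + 1) : ℝ)) := by
    ext rc cc
    rcases rc with r | s <;> rcases cc with c | t
    · simp only [Matrix.submatrix_apply, finSumFinEquiv_apply_left, hM, Matrix.of_apply,
        Fin.coe_castAdd, r.isLt, if_true, dGamma, Matrix.fromBlocks_apply₁₁]
      rcases lt_trichotomy (c : ℕ) (r : ℕ) with hcr | hcr | hcr
      · rw [Nat.descFactorial_eq_zero_iff_lt.mpr (by omega), Matrix.diagonal_apply_ne']
        · simp
        · exact fun h => absurd (congrArg (Fin.val) h) (by omega)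
      · have hrc : r = c := Fin.ext hcr.symm
        rw [hrc, Matrix.diagonal_apply_eq]
        rw [show (c : ℕ) + 1 - ((c : ℕ) + 1) = 0 by omega, pow_zero,
          Nat.descFactorial_self, mul_one]
      · rw [zero_pow (by omega), mul_zero, Matrix.diagonal_apply_ne']
        exact fun h => absurd (congrArg (Fin.val) h) (by omega)
    · simp only [Matrix.submatrix_apply, finSumFinEquiv_apply_left, finSumFinEquiv_apply_right,
        hM, Matrix.of_apply, Fin.coe_castAdd, Fin.coe_natAdd, r.isLt, if_true, dGamma,
        Matrix.fromBlocks_apply₁₂, Matrix.zero_apply]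
      rw [zero_pow (by have := r.isLt; omega), mul_zero]
    · simp only [Matrix.submatrix_apply, finSumFinEquiv_apply_left, finSumFinEquiv_apply_right,
        hM, Matrix.of_apply, Fin.coe_castAdd, Fin.coe_natAdd, dGamma,
        Matrix.fromBlocks_apply₂₁]
      rw [if_neg (by omega), show l + (s : ℕ) - l + 1 = (s : ℕ) + 1 by omega, one_pow, mul_one]
    · simp only [Matrix.submatrix_apply, finSumFinEquiv_apply_right, hM, Matrix.of_apply,
        Fin.coe_natAdd, dGamma, Matrix.fromBlocks_apply₂₂]
      rw [if_neg (by omega), show l + (s : ℕ) - l + 1 = (s : ℕ) + 1 by omega, one_pow, mul_one]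
  -- determinant of the lower-right block
  have hNsplit : (Matrix.of fun (s t : Fin m) =>
      (Nat.descFactorial (l + (t : ℕ) + 1) ((s : ℕ) + 1) : ℝ))
      = Matrix.of (fun (s t : Fin m) =>
          ((l : ℝ) + (t : ℕ) + 1) * (qpoly (s : ℕ)).eval ((l : ℝ) + (t : ℕ) + 1)) := by
    ext s t
    rw [Matrix.of_apply, Matrix.of_apply, cast_descFact, qpoly_eval,
      Finset.prod_range_succ']
    push_cast
    rw [sub_zero]
    exact mul_comm _ _
  have hBdet : (Matrix.of (fun (s t : Fin m) =>
      (qpoly (s : ℕ)).eval ((l : ℝ) + (t : ℕ) + 1))).det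
      = ((∏ x ∈ Finset.range m, x.factorial : ℕ) : ℝ) := by
    rw [← Matrix.det_transpose]
    have htr : (Matrix.of (fun (s t : Fin m) =>
        (qpoly (s : ℕ)).eval ((l : ℝ) + (t : ℕ) + 1)))ᵀ
        = Matrix.of (fun (t s : Fin m) => (qpoly (s : ℕ)).eval ((l : ℝ) + (t : ℕ) + 1)) := by
      ext a b; rfl
    rw [htr, ← Matrix.det_eval_matrixOfPolynomials_eq_det_vandermonde
      (fun t : Fin m => ((l : ℝ) + (t : ℕ) + 1)) (fun s : Fin m => qpoly (s : ℕ))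
      (fun s => qpoly_natDegree _) (fun s => qpoly_monic _)]
    have hfun : (fun t : Fin m => ((l : ℝ) + (t : ℕ) + 1))
        = fun t : Fin m => (((t : ℕ) : ℝ) + ((l : ℝ) + 1)) := by
      funext t; ring
    rw [hfun, Matrix.det_vandermonde_add, vdm_id]
  have hP : ∏ t ∈ Finset.range m, (l + t + 1) = Nat.choose (l + m) l * m.factorial := by
    refine Nat.eq_of_mul_eq_mul_left (Nat.factorial_pos l) ?_
    rw [fact_prod_shift]
    have hc := Nat.choose_mul_factorial_mul_factorial hl
    simp only [Nat.add_sub_cancel_left] at hc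
    rw [← hc]; ring
  rw [← Matrix.det_submatrix_equiv_self finSumFinEquiv M, key,
    Matrix.det_fromBlocks_zero₁₂, Matrix.det_diagonal, hNsplit]
  rw [show (Matrix.of (fun (s t : Fin m) =>
      ((l : ℝ) + (t : ℕ) + 1) * (qpoly (s : ℕ)).eval ((l : ℝ) + (t : ℕ) + 1)))
      = Matrix.of (fun (s t : Fin m) =>
        (fun u : Fin m => ((l : ℝ) + (u : ℕ) + 1)) t *
        (Matrix.of (fun (a b : Fin m) =>
          (qpoly (a : ℕ)).eval ((l : ℝ) + (b : ℕ) + 1))) s t) from rfl,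
    Matrix.det_mul_row, hBdet]
  have h1 : (∏ r : Fin l, (((r : ℕ) + 1).factorial : ℝ))
      = ((∏ r ∈ Finset.range l, (r + 1).factorial : ℕ) : ℝ) := by
    rw [Nat.cast_prod]
    exact Fin.prod_univ_eq_prod_range (fun r => ((r + 1).factorial : ℝ)) l
  have h2 : (∏ t : Fin m, ((l : ℝ) + (t : ℕ) + 1))
      = ((∏ t ∈ Finset.range m, (l + t + 1) : ℕ) : ℝ) := by
    push_cast
    exact Fin.prod_univ_eq_prod_range (fun t => ((l : ℝ) + t + 1)) m
  rw [h1, h2, Nat.add_sub_cancel_left,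
    show (∏ i ∈ Finset.Icc 1 l, (Nat.factorial i : ℝ))
      = ((∏ i ∈ Finset.Icc 1 l, Nat.factorial i : ℕ) : ℝ) from (Nat.cast_prod _ _).symm,
    show (∏ j ∈ Finset.Icc 1 m, (Nat.factorial j : ℝ))
      = ((∏ j ∈ Finset.Icc 1 m, Nat.factorial j : ℕ) : ℝ) from (Nat.cast_prod _ _).symm,
    ← Nat.cast_mul, ← Nat.cast_mul, ← Nat.cast_mul, ← Nat.cast_mul, Nat.abs_cast,
    Nat.cast_inj]
  rw [Nat.prod_range_factorial_succ, Nat.prod_Icc_factorial, Nat.prod_Icc_factorial, hP,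
    ← Nat.prod_range_succ_factorial m, Finset.prod_range_succ]
  ring
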